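/- Fix 0 < p ≤ 1/2, α ∈ (0,1/2], an integer d ≥ 1, a fixed H₁ ∈ F₂^{n̄×n}, and let the entries of H₂,…,H_d be i.i.d. Bernoulli(p). Then P(minW(d) < αnd), i.e., the probability that there exists c ∈ C_d with ‖c‖ < αnd, is at most (1−p)^{−n̄} · 2^{−nd·((1−R)·log₂(1/(1−p)) − H(α))}. -/

import Mathlib

/-!
STATEMENT 5: With `H₂,…,H_d` i.i.d. Bernoulli(p), `0 < p ≤ 1/2`, and `α ∈ (0,1/2]`,
the probability that some `c ∈ C_d` has `‖c‖ < αnd` (i.e. `minW(d) < αnd`) is at most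
`(1−p)^{−n̄} · 2^{−nd((1−R)log₂(1/(1−p)) − H(α))}` where `R = k/n`.
-/

open scoped BigOperators

/-- Binary entropy function in bits (with `H(0) = H(1) = 0`, since `Real.logb 2 0 = 0`). -/
noncomputable def binH (x : ℝ) : ℝ := -(x * Real.logb 2 x) - (1 - x) * Real.logb 2 (1 - x)

/-- The `n̄d × nd` block lower-triangular Toeplitz matrix `𝐇_d` whose `(i,j)`-th block is
`H (i−j+1)` for `i ≥ j` and `0` otherwise (blocks are indexed from `0`, so the block
sequence used is `H 1, H 2, …, H d`). -/
def toep (nb n : ℕ) (H : ℕ → Matrix (Fin nb) (Fin n) (ZMod 2)) (d : ℕ) :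
    Matrix (Fin d × Fin nb) (Fin d × Fin n) (ZMod 2) :=
  fun p q => if (q.1 : ℕ) ≤ (p.1 : ℕ) then H ((p.1 : ℕ) - (q.1 : ℕ) + 1) p.2 q.2 else 0

/-- A block vector `(c₁, …, c_d) ∈ (F₂ⁿ)^d` flattened into a vector indexed by `Fin d × Fin n`. -/
def flat {d n : ℕ} (c : Fin d → Fin n → ZMod 2) : Fin d × Fin n → ZMod 2 :=
  fun q => c q.1 q.2

/-- Hamming weight `‖c‖` of a block vector. -/
def wt {d n : ℕ} (c : Fin d → Fin n → ZMod 2) : ℕ := hammingNorm (flat c)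

/-- `C_d = {c ∈ (F₂ⁿ)^d : 𝐇_d c = 0 and c₁ ≠ 0}`. -/
def Cset (nb n : ℕ) (H : ℕ → Matrix (Fin nb) (Fin n) (ZMod 2)) (d : ℕ) (hd : 0 < d) :
    Finset (Fin d → Fin n → ZMod 2) :=
  Finset.univ.filter fun c =>
    Matrix.mulVec (toep nb n H d) (flat c) = 0 ∧ c ⟨0, hd⟩ ≠ 0

/-- `numW(w,d) = #{c ∈ C_d : ‖c‖ = w}`. -/
def numW (nb n : ℕ) (H : ℕ → Matrix (Fin nb) (Fin n) (ZMod 2)) (d : ℕ) (hd : 0 < d)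
    (w : ℕ) : ℕ :=
  ((Cset nb n H d hd).filter fun c => wt c = w).card

/-- Bernoulli(p) weight of a binary matrix: each entry is `1` w.p. `p`, `0` w.p. `1−p`. -/
noncomputable def matWt (p : ℝ) {nb n : ℕ} (M : Matrix (Fin nb) (Fin n) (ZMod 2)) : ℝ :=
  ∏ a : Fin nb, ∏ b : Fin n, if M a b = 1 then p else 1 - p

/-- The i.i.d. product weight of a finite tuple of binary matrices. -/
noncomputable def tupWt (p : ℝ) {ι : Type} [Fintype ι] {nb n : ℕ}
    (ω : ι → Matrix (Fin nb) (Fin n) (ZMod 2)) : ℝ := ∏ i, matWt p (ω i)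

/-- The random block sequence in the ensemble `TZ_p`: block `1` is the fixed matrix `H1`,
blocks `τ ≥ 2` are random (given by the sample point `ω`; the slots `ω 0, ω 1` are
unused, so summing their Bernoulli weights out leaves the probability unchanged). -/
def seq {nb n : ℕ} (H1 : Matrix (Fin nb) (Fin n) (ZMod 2)) {D : ℕ}
    (ω : Fin (D + 1) → Matrix (Fin nb) (Fin n) (ZMod 2)) :
    ℕ → Matrix (Fin nb) (Fin n) (ZMod 2) :=
  fun τ => if τ = 1 then H1 else if h2 : τ < D + 1 then ω ⟨τ, h2⟩ else 0

open scoped Classical in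
/-- Probability, over the blocks `H₂, …, H_{D}` having i.i.d. Bernoulli(p) entries,
of an event `S` (a sum of i.i.d. product weights over the finite sample space). -/
noncomputable def prOmega (p : ℝ) {nb n : ℕ} (D : ℕ)
    (S : (Fin (D + 1) → Matrix (Fin nb) (Fin n) (ZMod 2)) → Prop) : ℝ :=
  ∑ ω : Fin (D + 1) → Matrix (Fin nb) (Fin n) (ZMod 2), if S ω then tupWt p ω else 0

section AuxLemmas

open Finset

noncomputable def gw (p : ℝ) {ι : Type*} [Fintype ι] (v : ι → ZMod 2) : ℝ :=
  ∏ i, if v i = 1 then p else 1 - p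

lemma zmod2_sum (f : ZMod 2 → ℝ) : ∑ x : ZMod 2, f x = f 0 + f 1 := by
  rw [show (Finset.univ : Finset (ZMod 2)) = {0, 1} from by decide,
    Finset.sum_insert (by decide), Finset.sum_singleton]

lemma gw_nonneg {p : ℝ} (h0 : 0 ≤ p) (h1 : p ≤ 1) {ι : Type*} [Fintype ι]
    (v : ι → ZMod 2) : 0 ≤ gw p v := by
  refine Finset.prod_nonneg fun i _ => ?_
  split_ifs <;> linarith

lemma sum_gw (p : ℝ) (ι : Type*) [Fintype ι] [DecidableEq ι] :
    ∑ v : ι → ZMod 2, gw p v = 1 := by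
  unfold gw
  rw [← Fintype.piFinset_univ, ← Finset.prod_univ_sum
    (t := fun _ : ι => (Finset.univ : Finset (ZMod 2)))
    (f := fun _ x => if x = 1 then p else 1 - p)]
  have h1 : (∑ x : ZMod 2, if x = 1 then p else 1 - p) = 1 := by
    rw [zmod2_sum]; norm_num
  rw [Finset.prod_congr rfl fun i _ => h1, Finset.prod_const_one]

lemma matWt_eq (p : ℝ) {nb n : ℕ} (M : Matrix (Fin nb) (Fin n) (ZMod 2)) :
    matWt p M = ∏ a, gw p (M a) := rfl

lemma matWt_nonneg {p : ℝ} (h0 : 0 ≤ p) (h1 : p ≤ 1) {nb n : ℕ}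
    (M : Matrix (Fin nb) (Fin n) (ZMod 2)) : 0 ≤ matWt p M := by
  rw [matWt_eq]
  exact Finset.prod_nonneg fun a _ => gw_nonneg h0 h1 _

lemma tupWt_nonneg {p : ℝ} (h0 : 0 ≤ p) (h1 : p ≤ 1) {ι : Type} [Fintype ι] {nb n : ℕ}
    (ω : ι → Matrix (Fin nb) (Fin n) (ZMod 2)) : 0 ≤ tupWt p ω :=
  Finset.prod_nonneg fun i _ => matWt_nonneg h0 h1 _

lemma sum_matWt (p : ℝ) (nb n : ℕ) :
    ∑ M : Matrix (Fin nb) (Fin n) (ZMod 2), matWt p M = 1 := by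
  rw [← Equiv.sum_comp (Matrix.of : (Fin nb → Fin n → ZMod 2) ≃ _) (matWt p)]
  have h1 : ∀ f : Fin nb → Fin n → ZMod 2, matWt p (Matrix.of f) = ∏ a, gw p (f a) :=
    fun f => rfl
  rw [Finset.sum_congr rfl fun f _ => h1 f]
  rw [← Fintype.piFinset_univ, ← Finset.prod_univ_sum
    (t := fun _ : Fin nb => (Finset.univ : Finset (Fin n → ZMod 2)))
    (f := fun _ r => gw p r)]
  rw [Finset.prod_congr rfl fun a _ => sum_gw p (Fin n), Finset.prod_const_one]

lemma sum_tupWt (p : ℝ) (ι : Type) [Fintype ι] [DecidableEq ι] (nb n : ℕ) :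
    ∑ ω : ι → Matrix (Fin nb) (Fin n) (ZMod 2), tupWt p ω = 1 := by
  unfold tupWt
  rw [← Fintype.piFinset_univ, ← Finset.prod_univ_sum
    (t := fun _ : ι => (Finset.univ : Finset (Matrix (Fin nb) (Fin n) (ZMod 2))))
    (f := fun _ M => matWt p M)]
  rw [Finset.prod_congr rfl fun i _ => sum_matWt p nb n, Finset.prod_const_one]

end AuxLemmas
section AuxLemmas2

open Finset

lemma zmod2_ne_zero : ∀ {z : ZMod 2}, z ≠ 0 → z = 1 := by decide

lemma zmod2_ne_one : ∀ {z : ZMod 2}, z ≠ 1 → z = 0 := by decide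

lemma zmod2_ne_imp : ∀ {z t : ZMod 2}, z ≠ t → z = t + 1 := by decide

lemma row_bound {n : ℕ} {p : ℝ} (hp0 : 0 < p) (hp : p ≤ 1 / 2)
    (x : Fin n → ZMod 2) (hx : x ≠ 0) (t : ZMod 2) :
    ∑ r : Fin n → ZMod 2, (if dotProduct r x = t then gw p r else 0) ≤ 1 - p := by
  classical
  have hp1 : p ≤ 1 := by linarith
  have h1p : 0 < 1 - p := by linarith
  obtain ⟨b₀, hb₀⟩ : ∃ b, x b = 1 := by
    by_contra h
    push_neg at h
    exact hx (funext fun b => by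
      by_contra hb; exact h b (zmod2_ne_zero hb))
  set S : ZMod 2 → ℝ := fun u => ∑ r : Fin n → ZMod 2,
    (if dotProduct r x = u then gw p r else 0) with hS
  have key1 : S t + S (t + 1) = 1 := by
    rw [hS, ← Finset.sum_add_distrib]
    rw [← sum_gw p (Fin n)]
    refine Finset.sum_congr rfl fun r _ => ?_
    by_cases h : dotProduct r x = t
    · rw [if_pos h, if_neg (by rw [h]; intro hc; exact one_ne_zero (by
        have := add_left_cancel (a := t) (b := (1:ZMod 2)) (c := 0) (by
          rw [add_zero]; exact hc.symm); exact this)), add_zero]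
    · rw [if_neg h, if_pos (zmod2_ne_imp h), zero_add]
  have hΦinv : Function.Involutive
      (fun r : Fin n → ZMod 2 => Function.update r b₀ (r b₀ + 1)) := by
    intro r
    funext b
    by_cases hb : b = b₀
    · subst hb
      simp only [Function.update_self]
      rw [add_assoc, show (1 : ZMod 2) + 1 = 0 from by decide, add_zero]
    · simp [Function.update_of_ne hb]
  have hdotΦ : ∀ r : Fin n → ZMod 2,
      dotProduct (Function.update r b₀ (r b₀ + 1)) x = dotProduct r x + 1 := by
    intro r
    unfold dotProduct
    rw [← Finset.add_sum_erase _ _ (Finset.mem_univ b₀),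
        ← Finset.add_sum_erase _ (fun b => r b * x b) (Finset.mem_univ b₀)]
    rw [Function.update_self, hb₀, mul_one, mul_one]
    have heq : ∑ b ∈ Finset.univ.erase b₀, Function.update r b₀ (r b₀ + 1) b * x b
        = ∑ b ∈ Finset.univ.erase b₀, r b * x b :=
      Finset.sum_congr rfl fun b hb => by
        rw [Function.update_of_ne (Finset.ne_of_mem_erase hb)]
    rw [heq]; ring
  have hgwsplit : ∀ s : Fin n → ZMod 2, gw p s =
      (if s b₀ = 1 then p else 1 - p) *
        ∏ b ∈ Finset.univ.erase b₀, (if s b = 1 then p else 1 - p) :=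
    fun s => (Finset.mul_prod_erase _ _ (Finset.mem_univ b₀)).symm
  have key2 : p * S t ≤ (1 - p) * S (t + 1) := by
    have hre : S (t + 1) = ∑ r : Fin n → ZMod 2,
        (if dotProduct r x = t then gw p (Function.update r b₀ (r b₀ + 1)) else 0) := by
      rw [hS]
      beta_reduce
      rw [← Equiv.sum_comp (Function.Involutive.toPerm _ hΦinv)
        (fun r => if dotProduct r x = t + 1 then gw p r else 0)]
      refine Finset.sum_congr rfl fun r _ => ?_
      have hpr : (Function.Involutive.toPerm _ hΦinv) r = Function.update r b₀ (r b₀ + 1) := rfl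
      rw [hpr, hdotΦ r]; simp only [add_left_inj]
    rw [hre, hS]
    beta_reduce
    rw [Finset.mul_sum, Finset.mul_sum]
    refine Finset.sum_le_sum fun r _ => ?_
    by_cases h : dotProduct r x = t
    · rw [if_pos h, if_pos h]
      rw [hgwsplit r, hgwsplit (Function.update r b₀ (r b₀ + 1))]
      have hrest : ∏ b ∈ Finset.univ.erase b₀,
          (if Function.update r b₀ (r b₀ + 1) b = 1 then p else 1 - p)
          = ∏ b ∈ Finset.univ.erase b₀, (if r b = 1 then p else 1 - p) :=
        Finset.prod_congr rfl fun b hb => by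
          rw [Function.update_of_ne (Finset.ne_of_mem_erase hb)]
      rw [hrest, Function.update_self]
      have hRnn : 0 ≤ ∏ b ∈ Finset.univ.erase b₀, (if r b = 1 then p else 1 - p) :=
        Finset.prod_nonneg fun b _ => by split_ifs <;> linarith
      by_cases hr : r b₀ = 1
      · rw [if_pos hr, if_neg (by rw [hr]; decide)]
        nlinarith
      · rw [if_neg hr, if_pos (by rw [zmod2_ne_one hr]; decide)]
        exact le_of_eq (by ring)
    · rw [if_neg h, if_neg h, mul_zero, mul_zero]
  nlinarith [key1, key2]

lemma mat_bound {nb n : ℕ} {p : ℝ} (hp0 : 0 < p) (hp : p ≤ 1 / 2)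
    (x : Fin n → ZMod 2) (hx : x ≠ 0) (t : Fin nb → ZMod 2) :
    ∑ M : Matrix (Fin nb) (Fin n) (ZMod 2),
      (if Matrix.mulVec M x = t then matWt p M else 0) ≤ (1 - p) ^ nb := by
  classical
  rw [← Equiv.sum_comp (Matrix.of : (Fin nb → Fin n → ZMod 2) ≃ _)
    (fun M => if Matrix.mulVec M x = t then matWt p M else 0)]
  have hterm : ∀ f : Fin nb → Fin n → ZMod 2,
      (if Matrix.mulVec (Matrix.of f) x = t then matWt p (Matrix.of f) else 0)
      = ∏ a, (if dotProduct (f a) x = t a then gw p (f a) else 0) := by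
    intro f
    rw [Fintype.prod_ite_zero]
    by_cases hM : Matrix.mulVec (Matrix.of f) x = t
    · rw [if_pos hM, if_pos (show ∀ i, dotProduct (f i) x = t i from
        fun a => congrFun hM a)]
      rfl
    · rw [if_neg hM, if_neg (show ¬ ∀ i, dotProduct (f i) x = t i from
        fun hc => hM (funext hc))]
  rw [Finset.sum_congr rfl fun f _ => hterm f]
  rw [← Fintype.piFinset_univ, ← Finset.prod_univ_sum
    (t := fun _ : Fin nb => (Finset.univ : Finset (Fin n → ZMod 2)))
    (f := fun a r => if dotProduct r x = t a then gw p r else 0)]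
  calc ∏ a : Fin nb, ∑ r : Fin n → ZMod 2,
        (if dotProduct r x = t a then gw p r else 0)
      ≤ ∏ a : Fin nb, (1 - p) := by
        refine Finset.prod_le_prod (fun a _ => ?_) (fun a _ => row_bound hp0 hp x hx (t a))
        exact Finset.sum_nonneg fun r _ => by
          split_ifs
          · exact gw_nonneg (le_of_lt hp0) (by linarith) r
          · exact le_refl 0
    _ = (1 - p) ^ nb := by
        rw [Finset.prod_const, Finset.card_univ, Fintype.card_fin]

end AuxLemmas2
section Peel

open Finset

lemma peel {D nb n : ℕ} {p : ℝ} (hp0 : 0 < p) (hp : p ≤ 1 / 2)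
    (x : Fin n → ZMod 2) (hx : x ≠ 0) :
    ∀ (T : Finset (Fin (D + 1)))
      (g : Fin (D + 1) → (Fin (D + 1) → Matrix (Fin nb) (Fin n) (ZMod 2)) → (Fin nb → ZMod 2)),
      (∀ τ ∈ T, ∀ ω ω', (∀ σ, σ < τ → ω σ = ω' σ) → g τ ω = g τ ω') →
    ∑ ω : Fin (D + 1) → Matrix (Fin nb) (Fin n) (ZMod 2),
      (if ∀ τ ∈ T, Matrix.mulVec (ω τ) x = g τ ω then tupWt p ω else 0)
      ≤ (1 - p) ^ (nb * T.card) := by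
  classical
  have hp1 : p ≤ 1 := by linarith
  have h1p : (0:ℝ) ≤ 1 - p := by linarith
  intro T
  induction T using Finset.induction_on_max with
  | empty =>
      intro g hg
      simp only [Finset.notMem_empty, false_implies, implies_true, if_true,
        Finset.card_empty, Nat.mul_zero, pow_zero]
      exact le_of_eq (sum_tupWt p _ nb n)
  | insert a s hmax ih =>
      intro g hg
      have ha : a ∉ s := fun h => lt_irrefl a (hmax a h)
      have hea : ∀ (M : Matrix (Fin nb) (Fin n) (ZMod 2))
          (ρ : {j : Fin (D+1) // j ≠ a} → Matrix (Fin nb) (Fin n) (ZMod 2)),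
          (Equiv.funSplitAt a (Matrix (Fin nb) (Fin n) (ZMod 2))).symm (M, ρ) a = M := by
        intro M ρ
        rw [Equiv.funSplitAt_symm_apply, dif_pos rfl]
      have hej : ∀ (M : Matrix (Fin nb) (Fin n) (ZMod 2)) ρ (j : Fin (D+1)) (hj : j ≠ a),
          (Equiv.funSplitAt a (Matrix (Fin nb) (Fin n) (ZMod 2))).symm (M, ρ) j = ρ ⟨j, hj⟩ := by
        intro M ρ j hj
        rw [Equiv.funSplitAt_symm_apply, dif_neg hj]
      set e := (Equiv.funSplitAt a (Matrix (Fin nb) (Fin n) (ZMod 2))).symm with he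
      set W : ({j : Fin (D+1) // j ≠ a} → Matrix (Fin nb) (Fin n) (ZMod 2)) → ℝ :=
        fun ρ => ∏ j : {j : Fin (D+1) // j ≠ a}, matWt p (ρ j) with hW
      have hWnn : ∀ ρ, 0 ≤ W ρ :=
        fun ρ => Finset.prod_nonneg fun j _ => matWt_nonneg (le_of_lt hp0) hp1 _
      have htup : ∀ M ρ, tupWt p (e (M, ρ)) = matWt p M * W ρ := by
        intro M ρ
        show ∏ i, matWt p (e (M, ρ) i) = _
        rw [← Finset.mul_prod_erase _ _ (Finset.mem_univ a), hea]
        congr 1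
        rw [Finset.prod_subtype (Finset.univ.erase a) (p := fun j => j ≠ a)
          (fun j => by simp [Finset.mem_erase]) (fun j => matWt p (e (M, ρ) j))]
        exact Finset.prod_congr rfl fun j _ => by rw [hej M ρ j.1 j.2]
      have hagree : ∀ M ρ (σ : Fin (D+1)), σ ≠ a → e (M, ρ) σ = e (0, ρ) σ := by
        intro M ρ σ h
        rw [hej M ρ σ h, hej 0 ρ σ h]
      have hgagree : ∀ τ ∈ insert a s, ∀ M ρ, g τ (e (M, ρ)) = g τ (e (0, ρ)) := by
        intro τ hτ M ρ
        have hτa : (τ : Fin (D+1)) ≤ a := by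
          rcases Finset.mem_insert.mp hτ with rfl | hτs
          · exact le_refl _
          · exact le_of_lt (hmax τ hτs)
        exact hg τ hτ _ _ fun σ hσ => hagree M ρ σ (ne_of_lt (lt_of_lt_of_le hσ hτa))
      have hcond : ∀ M ρ,
          ((∀ τ ∈ insert a s, Matrix.mulVec (e (M, ρ) τ) x = g τ (e (M, ρ)))
            ↔ (Matrix.mulVec M x = g a (e (0, ρ))) ∧
              (∀ τ ∈ s, Matrix.mulVec (e (0, ρ) τ) x = g τ (e (0, ρ)))) := by
        intro M ρ
        constructor
        · intro h
          refine ⟨?_, fun τ hτ => ?_⟩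
          · have h2 := h a (Finset.mem_insert_self a s)
            rwa [hea, hgagree a (Finset.mem_insert_self a s) M ρ] at h2
          · have h2 := h τ (Finset.mem_insert_of_mem hτ)
            rwa [hagree M ρ τ (ne_of_lt (hmax τ hτ)),
              hgagree τ (Finset.mem_insert_of_mem hτ) M ρ] at h2
        · rintro ⟨h1, h2⟩ τ hτ
          rcases Finset.mem_insert.mp hτ with rfl | hτs
          · rw [hea, hgagree τ hτ M ρ]; exact h1
          · rw [hagree M ρ τ (ne_of_lt (hmax τ hτs)), hgagree τ hτ M ρ]
            exact h2 τ hτs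
      have hsplit : ∀ F : (Fin (D + 1) → Matrix (Fin nb) (Fin n) (ZMod 2)) → ℝ,
          ∑ ω : Fin (D + 1) → Matrix (Fin nb) (Fin n) (ZMod 2), F ω
            = ∑ ρ : {j : Fin (D+1) // j ≠ a} → Matrix (Fin nb) (Fin n) (ZMod 2),
                ∑ M : Matrix (Fin nb) (Fin n) (ZMod 2), F (e (M, ρ)) := by
        intro F
        rw [← Equiv.sum_comp e F, Fintype.sum_prod_type, Finset.sum_comm]
      rw [hsplit]
      calc ∑ ρ : {j : Fin (D+1) // j ≠ a} → Matrix (Fin nb) (Fin n) (ZMod 2),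
            ∑ M : Matrix (Fin nb) (Fin n) (ZMod 2),
            (if ∀ τ ∈ insert a s, Matrix.mulVec (e (M, ρ) τ) x = g τ (e (M, ρ))
              then tupWt p (e (M, ρ)) else 0)
          = ∑ ρ : {j : Fin (D+1) // j ≠ a} → Matrix (Fin nb) (Fin n) (ZMod 2),
              (if ∀ τ ∈ s, Matrix.mulVec (e (0, ρ) τ) x = g τ (e (0, ρ))
                then (∑ M : Matrix (Fin nb) (Fin n) (ZMod 2),
                  if Matrix.mulVec M x = g a (e (0, ρ))
                  then matWt p M else 0) * W ρ else 0) := by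
            refine Finset.sum_congr rfl fun ρ _ => ?_
            by_cases hBρ : ∀ τ ∈ s, Matrix.mulVec (e (0, ρ) τ) x = g τ (e (0, ρ))
            · rw [if_pos hBρ, Finset.sum_mul]
              refine Finset.sum_congr rfl fun M _ => ?_
              by_cases hA : Matrix.mulVec M x = g a (e (0, ρ))
              · rw [if_pos ((hcond M ρ).mpr ⟨hA, hBρ⟩), if_pos hA, htup]
              · rw [if_neg (fun hc => hA ((hcond M ρ).mp hc).1), if_neg hA, zero_mul]
            · rw [if_neg hBρ]
              refine Finset.sum_eq_zero fun M _ => ?_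
              exact if_neg (fun hc => hBρ ((hcond M ρ).mp hc).2)
        _ ≤ ∑ ρ : {j : Fin (D+1) // j ≠ a} → Matrix (Fin nb) (Fin n) (ZMod 2),
              (if ∀ τ ∈ s, Matrix.mulVec (e (0, ρ) τ) x = g τ (e (0, ρ))
                then (1 - p) ^ nb * W ρ else 0) := by
            refine Finset.sum_le_sum fun ρ _ => ?_
            by_cases hBρ : ∀ τ ∈ s, Matrix.mulVec (e (0, ρ) τ) x = g τ (e (0, ρ))
            · rw [if_pos hBρ, if_pos hBρ]
              exact mul_le_mul_of_nonneg_right (mat_bound hp0 hp x hx _) (hWnn ρ)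
            · rw [if_neg hBρ, if_neg hBρ]
        _ = (1 - p) ^ nb * ∑ ρ : {j : Fin (D+1) // j ≠ a} → Matrix (Fin nb) (Fin n) (ZMod 2),
              (if ∀ τ ∈ s, Matrix.mulVec (e (0, ρ) τ) x = g τ (e (0, ρ)) then W ρ else 0) := by
            rw [Finset.mul_sum]
            refine Finset.sum_congr rfl fun ρ _ => ?_
            by_cases hBρ : ∀ τ ∈ s, Matrix.mulVec (e (0, ρ) τ) x = g τ (e (0, ρ))
            · rw [if_pos hBρ, if_pos hBρ]
            · rw [if_neg hBρ, if_neg hBρ, mul_zero]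
        _ = (1 - p) ^ nb * ∑ ω : Fin (D + 1) → Matrix (Fin nb) (Fin n) (ZMod 2),
              (if ∀ τ ∈ s, Matrix.mulVec (ω τ) x = g τ ω then tupWt p ω else 0) := by
            congr 1
            rw [hsplit (fun ω => if ∀ τ ∈ s, Matrix.mulVec (ω τ) x = g τ ω
              then tupWt p ω else 0)]
            refine Finset.sum_congr rfl fun ρ _ => ?_
            have hcnd : ∀ M, ((∀ τ ∈ s, Matrix.mulVec (e (M, ρ) τ) x = g τ (e (M, ρ)))
                ↔ (∀ τ ∈ s, Matrix.mulVec (e (0, ρ) τ) x = g τ (e (0, ρ)))) := by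
              intro M
              constructor <;> intro h τ hτ
              · have h2 := h τ hτ
                rwa [hagree M ρ τ (ne_of_lt (hmax τ hτ)),
                  hgagree τ (Finset.mem_insert_of_mem hτ) M ρ] at h2
              · rw [hagree M ρ τ (ne_of_lt (hmax τ hτ)),
                  hgagree τ (Finset.mem_insert_of_mem hτ) M ρ]
                exact h τ hτ
            by_cases hBρ : ∀ τ ∈ s, Matrix.mulVec (e (0, ρ) τ) x = g τ (e (0, ρ))
            · rw [if_pos hBρ]
              have hh : ∀ M, (if ∀ τ ∈ s, Matrix.mulVec (e (M, ρ) τ) x = g τ (e (M, ρ))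
                  then tupWt p (e (M, ρ)) else 0) = matWt p M * W ρ := fun M => by
                rw [if_pos ((hcnd M).mpr hBρ), htup]
              rw [Finset.sum_congr rfl fun M _ => hh M, ← Finset.sum_mul, sum_matWt, one_mul]
            · rw [if_neg hBρ]
              exact (Finset.sum_eq_zero fun M _ =>
                if_neg (fun hc => hBρ ((hcnd M).mp hc))).symm
        _ ≤ (1 - p) ^ nb * (1 - p) ^ (nb * s.card) := by
            refine mul_le_mul_of_nonneg_left ?_ (pow_nonneg h1p nb)
            exact ih g (fun τ hτ => hg τ (Finset.mem_insert_of_mem hτ))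
        _ = (1 - p) ^ (nb * (insert a s).card) := by
            rw [← pow_add, Finset.card_insert_of_notMem ha]
            ring_nf

end Peel
section Counting

open Finset

lemma gw_eq_pow (p : ℝ) {ι : Type*} [Fintype ι] [DecidableEq ι] (v : ι → ZMod 2) :
    gw p v = p ^ (hammingNorm v) * (1 - p) ^ (Fintype.card ι - hammingNorm v) := by
  classical
  have hfilter : (Finset.univ.filter fun i => v i = 1)
      = (Finset.univ.filter fun i => v i ≠ 0) :=
    Finset.filter_congr fun i _ =>
      ⟨fun h => by rw [h]; exact one_ne_zero, zmod2_ne_zero⟩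
  have hnorm : hammingNorm v = (Finset.univ.filter fun i => v i = 1).card :=
    (congrArg Finset.card hfilter).symm
  have hcompl : (Finset.univ.filter fun x => ¬ v x = 1).card
      = Fintype.card ι - hammingNorm v := by
    rw [Finset.filter_not, Finset.card_sdiff_of_subset (Finset.filter_subset _ _),
      Finset.card_univ, hnorm]
  unfold gw
  rw [Finset.prod_ite (f := fun _ => p) (g := fun _ => (1 - p)), Finset.prod_const,
    Finset.prod_const, hcompl, ← hnorm]

lemma count_bound {ι : Type*} [Fintype ι] {α : ℝ} (hα0 : 0 < α) (hα : α ≤ 1 / 2)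
    (B : Finset (ι → ZMod 2))
    (hB : ∀ v ∈ B, (hammingNorm v : ℝ) ≤ α * (Fintype.card ι)) :
    (B.card : ℝ) ≤ 2 ^ ((Fintype.card ι : ℝ) * binH α) := by
  classical
  have hα1 : α < 1 := by linarith
  have h1α0 : (0:ℝ) < 1 - α := by linarith
  set N : ℕ := Fintype.card ι with hN
  set θ : ℝ := α ^ (α * (N:ℝ)) * (1 - α) ^ ((1 - α) * (N:ℝ)) with hθ
  have hθpos : 0 < θ :=
    mul_pos (Real.rpow_pos_of_pos hα0 _) (Real.rpow_pos_of_pos h1α0 _)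
  have hlow : ∀ v ∈ B, θ ≤ gw α v := by
    intro v hv
    have hwle : hammingNorm v ≤ N := by
      rw [hN, ← Finset.card_univ]
      exact Finset.card_filter_le _ _
    have hwα : (hammingNorm v : ℝ) ≤ α * N := hB v hv
    set w : ℕ := hammingNorm v with hw
    set eε : ℝ := α * N - w with heε
    have heε0 : 0 ≤ eε := by rw [heε]; linarith
    have hgw : gw α v = α ^ ((w : ℕ) : ℝ) * (1 - α) ^ (((N - w : ℕ) : ℕ) : ℝ) := by
      rw [gw_eq_pow, Real.rpow_natCast, Real.rpow_natCast]
    have hcast : (((N - w : ℕ) : ℕ) : ℝ) = (N : ℝ) - w := by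
      rw [Nat.cast_sub hwle]
    have hgw2 : gw α v = θ * ((1 - α) / α) ^ eε := by
      rw [hgw, hcast, hθ]
      rw [Real.div_rpow (le_of_lt h1α0) (le_of_lt hα0)]
      rw [div_eq_mul_inv, ← Real.rpow_neg (le_of_lt hα0)]
      rw [show (N : ℝ) - ((w : ℕ) : ℝ) = (1 - α) * N + eε from by rw [heε]; ring,
          show ((w : ℕ) : ℝ) = α * N + (-eε) from by rw [heε]; ring,
          Real.rpow_add hα0, Real.rpow_add h1α0]
      ring
    rw [hgw2]
    nth_rewrite 1 [← mul_one θ]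
    refine mul_le_mul_of_nonneg_left ?_ (le_of_lt hθpos)
    calc (1:ℝ) = 1 ^ eε := (Real.one_rpow eε).symm
      _ ≤ ((1 - α) / α) ^ eε :=
          Real.rpow_le_rpow zero_le_one ((one_le_div hα0).mpr (by linarith)) heε0
  have hsum : (B.card : ℝ) * θ ≤ 1 := by
    calc (B.card : ℝ) * θ = ∑ _v ∈ B, θ := by rw [Finset.sum_const, nsmul_eq_mul]
      _ ≤ ∑ v ∈ B, gw α v := Finset.sum_le_sum hlow
      _ ≤ ∑ v : ι → ZMod 2, gw α v := Finset.sum_le_sum_of_subset_of_nonneg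
            (Finset.subset_univ B) (fun v _ _ => gw_nonneg (le_of_lt hα0) (le_of_lt hα1) v)
      _ = 1 := sum_gw α ι
  have hinv : θ⁻¹ = 2 ^ ((N : ℝ) * binH α) := by
    have h2 : (2:ℝ) ^ ((N : ℝ) * binH α)
        = α ^ (-(α * (N:ℝ))) * (1 - α) ^ (-((1 - α) * (N:ℝ))) := by
      rw [show (N : ℝ) * binH α = Real.logb 2 α * (-(α * (N:ℝ)))
          + Real.logb 2 (1 - α) * (-((1 - α) * (N:ℝ))) from by simp only [binH]; ring]
      rw [Real.rpow_add (by norm_num : (0:ℝ) < 2),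
        Real.rpow_mul (by norm_num : (0:ℝ) ≤ 2),
        Real.rpow_mul (by norm_num : (0:ℝ) ≤ 2),
        Real.rpow_logb (by norm_num) (by norm_num) hα0,
        Real.rpow_logb (by norm_num) (by norm_num) h1α0]
    rw [h2, hθ, mul_inv,
      Real.rpow_neg (le_of_lt hα0), Real.rpow_neg (le_of_lt h1α0)]
  calc (B.card : ℝ) = (B.card : ℝ) * θ * θ⁻¹ := by field_simp
    _ ≤ 1 * θ⁻¹ := mul_le_mul_of_nonneg_right hsum (inv_nonneg.mpr (le_of_lt hθpos))
    _ = 2 ^ ((N : ℝ) * binH α) := by rw [one_mul, hinv]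

end Counting
section MainAux

open Finset

/-- The "past" part of block equation `τ`. -/
def gfun {nb n d : ℕ} (H1 : Matrix (Fin nb) (Fin n) (ZMod 2))
    (c : Fin d → Fin n → ZMod 2) (τ : Fin (d + 1))
    (ω : Fin (d + 1) → Matrix (Fin nb) (Fin n) (ZMod 2)) : Fin nb → ZMod 2 :=
  ∑ j : Fin d, if 1 ≤ (j : ℕ) ∧ (j : ℕ) ≤ (τ : ℕ) - 1
    then Matrix.mulVec (seq H1 ω ((τ : ℕ) - 1 - (j : ℕ) + 1)) (c j) else 0

lemma seq_agree {nb n d : ℕ} (H1 : Matrix (Fin nb) (Fin n) (ZMod 2))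
    {ω ω' : Fin (d + 1) → Matrix (Fin nb) (Fin n) (ZMod 2)} {τ : Fin (d + 1)}
    (hagree : ∀ σ, σ < τ → ω σ = ω' σ) (m : ℕ) (hm : m < (τ : ℕ)) :
    seq H1 ω m = seq H1 ω' m := by
  unfold seq
  by_cases h1 : m = 1
  · rw [if_pos h1, if_pos h1]
  · rw [if_neg h1, if_neg h1]
    have hmd : m < d + 1 := by have := τ.isLt; omega
    rw [dif_pos hmd, dif_pos hmd]
    exact hagree ⟨m, hmd⟩ (by simpa [Fin.lt_def] using hm)

lemma gfun_agree {nb n d : ℕ} (H1 : Matrix (Fin nb) (Fin n) (ZMod 2))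
    (c : Fin d → Fin n → ZMod 2) (τ : Fin (d + 1)) (hτ : 2 ≤ (τ : ℕ))
    (ω ω' : Fin (d + 1) → Matrix (Fin nb) (Fin n) (ZMod 2))
    (hagree : ∀ σ, σ < τ → ω σ = ω' σ) :
    gfun H1 c τ ω = gfun H1 c τ ω' := by
  unfold gfun
  refine Finset.sum_congr rfl fun j _ => ?_
  by_cases hc : 1 ≤ (j : ℕ) ∧ (j : ℕ) ≤ (τ : ℕ) - 1
  · rw [if_pos hc, if_pos hc,
      seq_agree H1 hagree ((τ : ℕ) - 1 - (j : ℕ) + 1) (by omega)]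
  · rw [if_neg hc, if_neg hc]

lemma toep_implies {k n d : ℕ} (hd : 0 < d)
    (H1 : Matrix (Fin (n - k)) (Fin n) (ZMod 2))
    (c : Fin d → Fin n → ZMod 2)
    (ω : Fin (d + 1) → Matrix (Fin (n - k)) (Fin n) (ZMod 2))
    (h0 : Matrix.mulVec (toep (n - k) n (seq H1 ω) d) (flat c) = 0)
    (τ : Fin (d + 1)) (hτ2 : 2 ≤ (τ : ℕ)) :
    Matrix.mulVec (ω τ) (c ⟨0, hd⟩) = gfun H1 c τ ω := by
  classical
  have hτd : (τ : ℕ) < d + 1 := τ.isLt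
  set i : Fin d := ⟨(τ : ℕ) - 1, by omega⟩ with hi
  have hiv : (i : ℕ) = (τ : ℕ) - 1 := rfl
  funext a
  have ha := congrFun h0 (i, a)
  simp only [Pi.zero_apply] at ha
  have hexp : ∑ j : Fin d, (if (j : ℕ) ≤ (i : ℕ)
      then Matrix.mulVec (seq H1 ω ((i : ℕ) - (j : ℕ) + 1)) (c j) a else 0) = 0 := by
    refine Eq.trans ?_ ha
    show _ = ∑ q : Fin d × Fin n, toep (n - k) n (seq H1 ω) d (i, a) q * flat c q
    rw [Fintype.sum_prod_type]
    refine Finset.sum_congr rfl fun j _ => ?_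
    by_cases hj : (j : ℕ) ≤ (i : ℕ)
    · rw [if_pos hj]
      show dotProduct _ _ = _
      unfold dotProduct
      refine Finset.sum_congr rfl fun b _ => ?_
      show seq H1 ω ((i : ℕ) - (j : ℕ) + 1) a b * c j b = _
      unfold toep flat
      rw [if_pos hj]
    · rw [if_neg hj]
      symm
      refine Finset.sum_eq_zero fun b _ => ?_
      show toep (n - k) n (seq H1 ω) d (i, a) (j, b) * flat c (j, b) = 0
      unfold toep
      rw [if_neg hj, zero_mul]
  set z : Fin d := ⟨0, hd⟩ with hz
  have hzv : (z : ℕ) = 0 := rfl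
  rw [← Finset.add_sum_erase _ _ (Finset.mem_univ z)] at hexp
  rw [if_pos (show (z : ℕ) ≤ (i : ℕ) from Nat.zero_le _)] at hexp
  have hseqτ : seq H1 ω ((i : ℕ) - (z : ℕ) + 1) = ω τ := by
    unfold seq
    rw [if_neg (by omega), dif_pos (by omega)]
    exact congrArg ω (Fin.ext (by simp only [Fin.val_mk]; omega))
  rw [hseqτ] at hexp
  have hAS : Matrix.mulVec (ω τ) (c z) a
      = ∑ j ∈ Finset.univ.erase z, (if (j : ℕ) ≤ (i : ℕ)
        then Matrix.mulVec (seq H1 ω ((i : ℕ) - (j : ℕ) + 1)) (c j) a else 0) := by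
    have h1 := eq_neg_of_add_eq_zero_left hexp
    rwa [CharTwo.neg_eq] at h1
  rw [hAS]
  have hgapply : gfun H1 c τ ω a = ∑ j : Fin d, (if 1 ≤ (j : ℕ) ∧ (j : ℕ) ≤ (τ : ℕ) - 1
      then Matrix.mulVec (seq H1 ω ((τ : ℕ) - 1 - (j : ℕ) + 1)) (c j) a else 0) := by
    unfold gfun
    rw [Finset.sum_apply a Finset.univ]
    refine Finset.sum_congr rfl fun j _ => ?_
    rw [apply_ite (fun f : Fin (n - k) → ZMod 2 => f a)]
    rfl
  rw [hgapply]
  have hzero : (if 1 ≤ (z : ℕ) ∧ (z : ℕ) ≤ (τ : ℕ) - 1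
      then Matrix.mulVec (seq H1 ω ((τ : ℕ) - 1 - (z : ℕ) + 1)) (c z) a else 0) = 0 :=
    if_neg (fun hc => by omega)
  rw [← Finset.sum_erase (f := fun j : Fin d => if 1 ≤ (j : ℕ) ∧ (j : ℕ) ≤ (τ : ℕ) - 1
    then Matrix.mulVec (seq H1 ω ((τ : ℕ) - 1 - (j : ℕ) + 1)) (c j) a else 0)
    Finset.univ hzero]
  refine Finset.sum_congr rfl fun j hj => ?_
  have hj1 : 1 ≤ (j : ℕ) := by
    have hne : (j : ℕ) ≠ 0 := fun h => (Finset.ne_of_mem_erase hj) (Fin.ext (by rw [h, hzv]))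
    omega
  rw [hiv]
  by_cases hle : (j : ℕ) ≤ (τ : ℕ) - 1
  · rw [if_pos hle, if_pos ⟨hj1, hle⟩]
  · rw [if_neg hle, if_neg (fun hc => hle hc.2)]

end MainAux
theorem toeplitz_min_distance_prob
    (k n : ℕ) (hk : 0 < k) (hkn : k < n)
    (p : ℝ) (hp0 : 0 < p) (hp : p ≤ 1 / 2)
    (α : ℝ) (hα0 : 0 < α) (hα : α ≤ 1 / 2)
    (d : ℕ) (hd : 0 < d)
    (H1 : Matrix (Fin (n - k)) (Fin n) (ZMod 2)) :
    prOmega p d (fun ω =>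
        ∃ c ∈ Cset (n - k) n (seq H1 ω) d hd, (wt c : ℝ) < α * n * d)
      ≤ (1 - p) ^ (-((n - k : ℕ) : ℝ)) *
        2 ^ (-((n * d : ℕ) : ℝ) *
          ((1 - (k : ℝ) / n) * Real.logb 2 (1 / (1 - p)) - binH α)) := by
  classical
  have hp1 : p ≤ 1 := by linarith
  have h1p0 : (0:ℝ) < 1 - p := by linarith
  have hn0 : 0 < n := lt_trans hk hkn
  set B : Finset (Fin d → Fin n → ZMod 2) :=
    Finset.univ.filter (fun c => c ⟨0, hd⟩ ≠ 0 ∧ (wt c : ℝ) < α * n * d) with hB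
  set T : Finset (Fin (d + 1)) := Finset.attachFin (Finset.Ico 2 (d + 1))
    (fun m hm => (Finset.mem_Ico.mp hm).2) with hT
  have hTmem : ∀ τ : Fin (d + 1), τ ∈ T ↔ 2 ≤ (τ : ℕ) := by
    intro τ
    rw [hT, Finset.mem_attachFin, Finset.mem_Ico]
    exact ⟨fun h => h.1, fun h => ⟨h, τ.isLt⟩⟩
  have hTcard : T.card = d - 1 := by
    rw [hT, Finset.card_attachFin, Nat.card_Ico]
    omega
  have step12 : prOmega p d (fun ω =>
      ∃ c ∈ Cset (n - k) n (seq H1 ω) d hd, (wt c : ℝ) < α * n * d)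
      ≤ (B.card : ℝ) * (1 - p) ^ ((n - k) * (d - 1)) := by
    have hunion : prOmega p d (fun ω =>
        ∃ c ∈ Cset (n - k) n (seq H1 ω) d hd, (wt c : ℝ) < α * n * d)
        ≤ ∑ c ∈ B, ∑ ω : Fin (d + 1) → Matrix (Fin (n - k)) (Fin n) (ZMod 2),
            (if ∀ τ ∈ T, Matrix.mulVec (ω τ) (c ⟨0, hd⟩) = gfun H1 c τ ω
              then tupWt p ω else 0) := by
      rw [Finset.sum_comm]
      unfold prOmega
      refine Finset.sum_le_sum fun ω _ => ?_
      by_cases hS : ∃ c ∈ Cset (n - k) n (seq H1 ω) d hd, (wt c : ℝ) < α * n * d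
      · rw [if_pos hS]
        obtain ⟨c, hcC, hcw⟩ := hS
        have hmem := Finset.mem_filter.mp hcC
        have hc0eq := hmem.2.1
        have hc0ne := hmem.2.2
        have hcB : c ∈ B := by
          rw [hB]
          exact Finset.mem_filter.mpr ⟨Finset.mem_univ _, hc0ne, hcw⟩
        have hterm : (if ∀ τ ∈ T, Matrix.mulVec (ω τ) (c ⟨0, hd⟩) = gfun H1 c τ ω
            then tupWt p ω else 0) = tupWt p ω :=
          if_pos (fun τ hτ => toep_implies hd H1 c ω hc0eq τ ((hTmem τ).mp hτ))
        refine le_trans (le_of_eq hterm.symm) (Finset.single_le_sum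
          (f := fun c' : Fin d → Fin n → ZMod 2 =>
            if ∀ τ ∈ T, Matrix.mulVec (ω τ) (c' ⟨0, hd⟩) = gfun H1 c' τ ω
            then tupWt p ω else 0) (fun c' _ => ?_) hcB)
        beta_reduce
        split_ifs
        · exact tupWt_nonneg (le_of_lt hp0) hp1 ω
        · exact le_refl 0
      · rw [if_neg hS]
        refine Finset.sum_nonneg fun c _ => ?_
        split_ifs
        · exact tupWt_nonneg (le_of_lt hp0) hp1 ω
        · exact le_refl 0
    refine le_trans hunion ?_
    calc ∑ c ∈ B, ∑ ω : Fin (d + 1) → Matrix (Fin (n - k)) (Fin n) (ZMod 2),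
          (if ∀ τ ∈ T, Matrix.mulVec (ω τ) (c ⟨0, hd⟩) = gfun H1 c τ ω
            then tupWt p ω else 0)
        ≤ ∑ c ∈ B, ((1 - p) ^ ((n - k) * T.card)) := by
          refine Finset.sum_le_sum fun c hc => ?_
          have hc0 : c ⟨0, hd⟩ ≠ 0 := by
            rw [hB] at hc
            exact (Finset.mem_filter.mp hc).2.1
          exact peel hp0 hp (c ⟨0, hd⟩) hc0 T (gfun H1 c)
            (fun τ hτ ω ω' hagr => gfun_agree H1 c τ ((hTmem τ).mp hτ) ω ω' hagr)
      _ = (B.card : ℝ) * (1 - p) ^ ((n - k) * (d - 1)) := by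
          rw [Finset.sum_const, nsmul_eq_mul, hTcard]
  have hcardprod : Fintype.card (Fin d × Fin n) = n * d := by
    simp [Fintype.card_prod, mul_comm]
  have hBcount : (B.card : ℝ) ≤ 2 ^ (((n * d : ℕ) : ℝ) * binH α) := by
    have hinj : Function.Injective (flat (d := d) (n := n)) :=
      fun c c' h => funext fun i => funext fun b => congrFun h (i, b)
    have himg : B.card = (B.image flat).card :=
      (Finset.card_image_of_injective B hinj).symm
    have hcnt := count_bound hα0 hα (B.image flat) (fun v hv => by
      obtain ⟨c, hcB, rfl⟩ := Finset.mem_image.mp hv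
      have hw : (wt c : ℝ) < α * n * d := by
        rw [hB] at hcB
        exact (Finset.mem_filter.mp hcB).2.2
      have : (hammingNorm (flat c) : ℝ) < α * n * d := hw
      rw [hcardprod]
      push_cast
      linarith)
    rw [himg]
    rw [hcardprod] at hcnt
    exact hcnt
  have hpowcast : (((1 - p) ^ ((n - k) * (d - 1))) : ℝ)
      = (1 - p) ^ ((((n : ℝ) - k) * ((d : ℝ) - 1))) := by
    rw [← Real.rpow_natCast (1 - p) ((n - k) * (d - 1))]
    congr 1
    rw [Nat.cast_mul, Nat.cast_sub (le_of_lt hkn), Nat.cast_sub hd]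
    norm_num
  have hRHS : (1 - p) ^ (-((n - k : ℕ) : ℝ)) *
      2 ^ (-((n * d : ℕ) : ℝ) *
        ((1 - (k : ℝ) / n) * Real.logb 2 (1 / (1 - p)) - binH α))
      = 2 ^ (((n * d : ℕ) : ℝ) * binH α)
        * (1 - p) ^ ((((n : ℝ) - k) * ((d : ℝ) - 1))) := by
    have hnR : (0:ℝ) < (n : ℝ) := Nat.cast_pos.mpr hn0
    have hKcast : ((n - k : ℕ) : ℝ) = (n : ℝ) - k := Nat.cast_sub (le_of_lt hkn)
    have hNcast : ((n * d : ℕ) : ℝ) = (n : ℝ) * d := by push_cast; ring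
    have hL : (2:ℝ) ^ (Real.logb 2 (1 / (1 - p))
          * (-(((n * d : ℕ) : ℝ) * (1 - (k : ℝ) / n))))
        = (1 - p) ^ ((((n : ℝ) - k) * (d : ℝ))) := by
      rw [Real.rpow_mul (by norm_num : (0:ℝ) ≤ 2),
        Real.rpow_logb (by norm_num) (by norm_num) (by positivity : (0:ℝ) < 1 / (1 - p))]
      rw [one_div, Real.inv_rpow (le_of_lt h1p0), ← Real.rpow_neg (le_of_lt h1p0)]
      congr 1
      rw [hNcast]
      field_simp
    have hE : -((n * d : ℕ) : ℝ) *
        ((1 - (k : ℝ) / n) * Real.logb 2 (1 / (1 - p)) - binH α)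
        = ((n * d : ℕ) : ℝ) * binH α + Real.logb 2 (1 / (1 - p))
          * (-(((n * d : ℕ) : ℝ) * (1 - (k : ℝ) / n))) := by ring
    rw [hE, Real.rpow_add (by norm_num : (0:ℝ) < 2), hL]
    rw [show (1 - p) ^ (-((n - k : ℕ) : ℝ)) *
        ((2:ℝ) ^ (((n * d : ℕ) : ℝ) * binH α) * (1 - p) ^ ((((n : ℝ) - k) * (d : ℝ))))
      = (2:ℝ) ^ (((n * d : ℕ) : ℝ) * binH α) *
        ((1 - p) ^ (-((n - k : ℕ) : ℝ)) * (1 - p) ^ ((((n : ℝ) - k) * (d : ℝ)))) from by ring]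
    rw [← Real.rpow_add h1p0, hKcast]
    congr 1
    ring
  calc prOmega p d (fun ω =>
        ∃ c ∈ Cset (n - k) n (seq H1 ω) d hd, (wt c : ℝ) < α * n * d)
      ≤ (B.card : ℝ) * (1 - p) ^ ((n - k) * (d - 1)) := step12
    _ ≤ 2 ^ (((n * d : ℕ) : ℝ) * binH α)
        * (1 - p) ^ ((((n : ℝ) - k) * ((d : ℝ) - 1))) := by
        rw [hpowcast]
        exact mul_le_mul_of_nonneg_right hBcount
          (Real.rpow_nonneg (le_of_lt h1p0) _)
    _ = _ := hRHS.symm
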